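/- Let G be an edge-minimal, k-edge-connected multigraph. Then G has at least two vertices of degree exactly k. -/

import Mathlib

/-- A multigraph on vertex type `V` with edge type `E`: each edge is assigned
an unordered pair of endpoints (parallel edges and loops are allowed). -/
structure Multigraph (V : Type) (E : Type) where
  ends : E → Sym2 V

namespace Multigraph

variable {V E : Type}

/-- Walks in a multigraph, recorded as the sequence of traversed edges. -/
inductive Walk (G : Multigraph V E) : V → V → Type
  | nil (v : V) : Walk G v v
  | cons {u v w : V} (e : E) (he : G.ends e = s(u, v)) (p : Walk G v w) : Walk G u w

/-- The list of edges traversed by a walk. -/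
def Walk.edges {G : Multigraph V E} : ∀ {u v : V}, G.Walk u v → List E
  | _, _, .nil _ => []
  | _, _, .cons e _ p => e :: p.edges

/-- The list of vertices visited by a walk, in order. -/
def Walk.support {G : Multigraph V E} : ∀ {u v : V}, G.Walk u v → List V
  | _, _, .nil v => [v]
  | u, _, .cons _ _ p => u :: p.support

/-- A path is a walk visiting no vertex twice. -/
def Walk.IsPath {G : Multigraph V E} {u v : V} (p : G.Walk u v) : Prop :=
  p.support.Nodup

/-- There exist `k` pairwise edge-disjoint `u`–`v` paths in `G`. -/
def HasEdgeDisjointPaths (G : Multigraph V E) (k : ℕ) (u v : V) : Prop :=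
  ∃ f : Fin k → G.Walk u v, (∀ i, (f i).IsPath) ∧
    ∀ i j, i ≠ j → ∀ e, e ∈ (f i).edges → e ∉ (f j).edges

/-- `G` is `k`-edge-connected: it has more than one vertex and any two distinct
vertices are joined by at least `k` pairwise edge-disjoint paths. -/
def EdgeConnected (G : Multigraph V E) (k : ℕ) : Prop :=
  (∃ u v : V, u ≠ v) ∧ ∀ u v : V, u ≠ v → G.HasEdgeDisjointPaths k u v

/-- Deletion of the edge `e₀`. -/
def deleteEdge (G : Multigraph V E) (e₀ : E) : Multigraph V {e : E // e ≠ e₀} :=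
  ⟨fun e => G.ends e.1⟩

/-- `G` is an edge-minimal `k`-edge-connected multigraph. -/
def EdgeMinimal (G : Multigraph V E) (k : ℕ) : Prop :=
  G.EdgeConnected k ∧ ∀ e₀ : E, ¬ (G.deleteEdge e₀).EdgeConnected k

/-- The unordered pair of endpoints of an edge, as a multiset. -/
def _root_.Sym2.toMset {α : Type*} : Sym2 α → Multiset α :=
  Sym2.lift ⟨fun a b => {a, b}, fun a b => Multiset.cons_swap a b 0⟩

open Classical in
/-- The degree of a vertex: the number of edge-endpoints at `v`, counting
parallel edges with multiplicity (and loops twice). -/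
noncomputable def degree (G : Multigraph V E) [Fintype E] (v : V) : ℕ :=
  ∑ e : E, Multiset.count v (G.ends e).toMset

/-- The relation `R^k`: `v₁ R^k v₂` iff `v₁ = v₂` or there are `k` pairwise
edge-disjoint paths between `v₁` and `v₂`. -/
def Rel (G : Multigraph V E) (k : ℕ) (v₁ v₂ : V) : Prop :=
  v₁ = v₂ ∨ G.HasEdgeDisjointPaths k v₁ v₂

end Multigraph

namespace Multigraph

open Finset

variable {V E : Type} {G : Multigraph V E}

lemma Walk.start_mem_support : ∀ {u v : V} (p : G.Walk u v), u ∈ p.support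
  | _, _, .nil v => by simp [Walk.support]
  | _, _, .cons e he p => by simp [Walk.support]

lemma Walk.end_mem_support : ∀ {u v : V} (p : G.Walk u v), v ∈ p.support
  | _, _, .nil v => by simp [Walk.support]
  | _, _, .cons e he p => by simp [Walk.support, p.end_mem_support]

lemma Walk.mem_support_of_edge : ∀ {u v x y : V} (p : G.Walk u v), ∀ e ∈ p.edges,
    G.ends e = s(x, y) → x ∈ p.support
  | _, _, x, y, .cons e' he' p, e, hmem, hends => by
    simp only [Walk.edges, List.mem_cons] at hmem
    simp only [Walk.support, List.mem_cons]
    rcases hmem with rfl | hmem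
    · rw [he'] at hends
      rw [Sym2.eq_iff] at hends
      rcases hends with ⟨rfl, rfl⟩ | ⟨rfl, rfl⟩
      · exact Or.inl rfl
      · exact Or.inr p.start_mem_support
    · exact Or.inr (p.mem_support_of_edge e hmem hends)

lemma Walk.edges_nodup_of_isPath : ∀ {u v : V} (p : G.Walk u v), p.IsPath → p.edges.Nodup
  | _, _, .nil v, _ => by simp [Walk.edges]
  | _, _, .cons e he p, hp => by
    simp only [Walk.IsPath, Walk.support, List.nodup_cons] at hp
    simp only [Walk.edges, List.nodup_cons]
    refine ⟨fun hmem => hp.1 ?_, p.edges_nodup_of_isPath hp.2⟩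
    exact p.mem_support_of_edge e hmem he

lemma Walk.not_loop_of_isPath : ∀ {u v : V} (p : G.Walk u v), p.IsPath → ∀ e ∈ p.edges,
    ∀ x : V, G.ends e ≠ s(x, x)
  | _, _, .cons e' he' p, hp, e, hmem, x, hends => by
    simp only [Walk.IsPath, Walk.support, List.nodup_cons] at hp
    simp only [Walk.edges, List.mem_cons] at hmem
    rcases hmem with rfl | hmem
    · rw [hends, Sym2.eq_iff] at he'
      rcases he' with ⟨rfl, rfl⟩ | ⟨rfl, rfl⟩ <;> exact hp.1 p.start_mem_support
    · exact p.not_loop_of_isPath hp.2 e hmem x hends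

/-- Tail-dropping for paths, existence form. -/
lemma Walk.exists_drop : ∀ {v w : V} (q : G.Walk v w), q.IsPath → ∀ x ∈ q.support,
    ∃ r : G.Walk x w, r.IsPath ∧ ∀ e ∈ r.edges, e ∈ q.edges
  | _, _, .nil v, _, x, hx => by
    simp only [Walk.support, List.mem_singleton] at hx
    subst hx
    exact ⟨.nil x, by simp [Walk.IsPath, Walk.support], by simp [Walk.edges]⟩
  | v, _, .cons e he p, hq, x, hx => by
    by_cases hxv : x = v
    · subst hxv
      exact ⟨.cons e he p, hq, fun _ h => h⟩
    · simp only [Walk.support, List.mem_cons] at hx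
      rcases hx with rfl | hx
      · exact absurd rfl hxv
      · simp only [Walk.IsPath, Walk.support, List.nodup_cons] at hq
        obtain ⟨r, hr1, hr2⟩ := p.exists_drop hq.2 x hx
        exact ⟨r, hr1, fun e' h => by simp [Walk.edges, hr2 e' h]⟩

/-- Every walk contains a path with the same endpoints whose edges are among the walk's. -/
lemma Walk.exists_path : ∀ {u w : V} (p : G.Walk u w),
    ∃ q : G.Walk u w, q.IsPath ∧ ∀ e ∈ q.edges, e ∈ p.edges
  | _, _, .nil v => ⟨.nil v, by simp [Walk.IsPath, Walk.support], by simp⟩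
  | u, w, .cons e he p => by
    obtain ⟨q, hq1, hq2⟩ := p.exists_path
    by_cases hu : u ∈ q.support
    · obtain ⟨r, hr1, hr2⟩ := q.exists_drop hq1 u hu
      exact ⟨r, hr1, fun e' h => by simp [Walk.edges, hq2 e' (hr2 e' h)]⟩
    · refine ⟨.cons e he q, ?_, ?_⟩
      · simpa [Walk.IsPath, Walk.support, hu] using hq1
      · intro e' h
        simp only [Walk.edges, List.mem_cons] at h ⊢
        rcases h with rfl | h
        · exact Or.inl rfl
        · exact Or.inr (hq2 e' h)

end Multigraph
namespace Multigraph

open Finset Classical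

variable {V E : Type} {G : Multigraph V E}

/-- `e` crosses the cut determined by `S`. -/
def cross (G : Multigraph V E) (S : Finset V) (e : E) : Prop :=
  ∃ x ∈ S, ∃ y, y ∉ S ∧ G.ends e = s(x, y)

open Classical in
/-- The number of edges crossing the cut determined by `S`. -/
noncomputable def cutsize (G : Multigraph V E) [Fintype E] (S : Finset V) : ℕ :=
  (univ.filter (G.cross S)).card

lemma cross_compl {S : Finset V} {e : E} [Fintype V] (h : G.cross S e) : G.cross Sᶜ e := by
  obtain ⟨x, hx, y, hy, hends⟩ := h
  exact ⟨y, by simpa using hy, x, by simpa using hx, by rwa [Sym2.eq_swap]⟩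

lemma cutsize_compl [Fintype V] [Fintype E] (S : Finset V) : G.cutsize Sᶜ = G.cutsize S := by
  classical
  unfold cutsize
  congr 1
  ext e
  simp only [mem_filter, mem_univ, true_and]
  constructor
  · intro h; simpa using cross_compl h
  · exact cross_compl

lemma Walk.exists_cross_out {S : Finset V} : ∀ {u v : V} (p : G.Walk u v),
    u ∈ S → v ∉ S → ∃ e ∈ p.edges, G.cross S e
  | _, _, .nil w, hu, hv => absurd hu hv
  | _, _, .cons (v := m) e he p, hu, hv => by
    by_cases hm : m ∈ S
    · obtain ⟨e', h1, h2⟩ := p.exists_cross_out hm hv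
      exact ⟨e', by simp [Walk.edges, h1], h2⟩
    · exact ⟨e, by simp [Walk.edges], ⟨_, hu, _, hm, he⟩⟩

lemma Walk.exists_cross_in {S : Finset V} : ∀ {u v : V} (p : G.Walk u v),
    u ∉ S → v ∈ S → ∃ e ∈ p.edges, G.cross S e
  | _, _, .nil w, hu, hv => absurd hv hu
  | _, _, .cons (v := m) e he p, hu, hv => by
    by_cases hm : m ∈ S
    · exact ⟨e, by simp [Walk.edges], ⟨_, hm, _, hu, by rwa [Sym2.eq_swap]⟩⟩
    · obtain ⟨e', h1, h2⟩ := p.exists_cross_in hm hv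
      exact ⟨e', by simp [Walk.edges, h1], h2⟩

/-- Easy direction of Menger: `k` edge-disjoint paths force every cut to have
at least `k` edges. -/
lemma le_cutsize_of_paths [Fintype E] {k : ℕ} {u v : V} {S : Finset V}
    (h : G.HasEdgeDisjointPaths k u v) (hu : u ∈ S) (hv : v ∉ S) :
    k ≤ G.cutsize S := by
  classical
  obtain ⟨f, _, hdisj⟩ := h
  choose e he hce using fun i => (f i).exists_cross_out hu hv
  have : (univ : Finset (Fin k)).card ≤ (univ.filter (G.cross S)).card := by
    apply Finset.card_le_card_of_injOn e
    · intro i _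
      simp only [Finset.mem_coe, mem_filter, mem_univ, true_and]
      exact hce i
    · intro i _ j _ hij
      by_contra hne
      exact hdisj i j hne (e i) (he i) (hij ▸ he j)
  unfold cutsize
  simpa using this

/-- If `S` contains two distinct vertices joined by a path with no edge inside
`S`, the path crosses the cut at least twice. -/
lemma Walk.exists_two_cross {S : Finset V} {a b : V} (p : G.Walk a b) (hp : p.IsPath)
    (ha : a ∈ S) (hb : b ∈ S) (hab : a ≠ b)
    (hins : ∀ e ∈ p.edges, ∀ x y, G.ends e = s(x, y) → x ∈ S → y ∈ S → False) :
    ∃ e₁ ∈ p.edges, ∃ e₂ ∈ p.edges, e₁ ≠ e₂ ∧ G.cross S e₁ ∧ G.cross S e₂ := by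
  classical
  cases p with
  | nil => exact absurd rfl hab
  | cons e he q =>
    rename_i m
    by_cases hm : m ∈ S
    · exact absurd (hins e (by simp [Walk.edges]) _ _ he ha hm) (fun h => h)
    · obtain ⟨e₂, h1, h2⟩ := q.exists_cross_in hm hb
      have hnodup := (Walk.cons e he q).edges_nodup_of_isPath hp
      simp only [Walk.edges, List.nodup_cons] at hnodup
      refine ⟨e, by simp [Walk.edges], e₂, by simp [Walk.edges, h1], ?_, ⟨_, ha, _, hm, he⟩, h2⟩
      rintro rfl
      exact hnodup.1 h1
end Multigraph
namespace Multigraph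

section Flows

attribute [local instance] Classical.propDecidable

open Finset

variable {V E : Type}

/-- Tail of the arc carried by edge `e` in flow `F`. -/
def tl (F : E → Option (V × V)) (e : E) : Option V := (F e).map Prod.fst

/-- Head of the arc carried by edge `e` in flow `F`. -/
def hd (F : E → Option (V × V)) (e : E) : Option V := (F e).map Prod.snd

/-- Out-flow at `x`. -/
noncomputable def outZ [Fintype E] (F : E → Option (V × V)) (x : V) : ℤ :=
  ∑ e : E, if tl F e = some x then 1 else 0

/-- In-flow at `x`. -/
noncomputable def inZ [Fintype E] (F : E → Option (V × V)) (x : V) : ℤ :=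
  ∑ e : E, if hd F e = some x then 1 else 0

/-- Excess at `x`. -/
noncomputable def exz [Fintype E] (F : E → Option (V × V)) (x : V) : ℤ :=
  outZ F x - inZ F x

/-- The flow respects edge endpoints. -/
def FValid (G : Multigraph V E) (F : E → Option (V × V)) : Prop :=
  ∀ e p q, F e = some (p, q) → G.ends e = s(p, q)

/-- The contribution of a single arc to the excess at `x`. -/
noncomputable def arcδ (o : Option (V × V)) (x : V) : ℤ :=
  (if o.map Prod.fst = some x then 1 else 0) - (if o.map Prod.snd = some x then 1 else 0)

lemma arcδ_some (p q x : V) :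
    arcδ (some (p, q)) x = (if x = p then 1 else 0) - (if x = q then 1 else 0) := by
  simp [arcδ, eq_comm]

lemma arcδ_none (x : V) : arcδ (none : Option (V × V)) x = 0 := by simp [arcδ]

lemma sum_diff_single [Fintype E] (e : E) (f g : E → ℤ) (h : ∀ e', e' ≠ e → f e' = g e') :
    ∑ e', f e' = ∑ e', g e' + (f e - g e) := by
  have h1 : ∑ e', (f e' - g e') = f e - g e := by
    rw [Finset.sum_eq_single_of_mem e (mem_univ e)]
    intro b _ hb
    rw [h b hb]; ring
  have h2 : ∑ e', (f e' - g e') = ∑ e', f e' - ∑ e', g e' := Finset.sum_sub_distrib _ _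
  omega

lemma exz_update [Fintype E] (F : E → Option (V × V)) (e : E) (o : Option (V × V)) (x : V) :
    exz (Function.update F e o) x = exz F x + arcδ o x - arcδ (F e) x := by
  have h1 := sum_diff_single e
      (fun e' => if tl (Function.update F e o) e' = some x then (1:ℤ) else 0)
      (fun e' => if tl F e' = some x then (1:ℤ) else 0)
      (fun e' he' => by simp [tl, Function.update_of_ne he'])
  have h2 := sum_diff_single e
      (fun e' => if hd (Function.update F e o) e' = some x then (1:ℤ) else 0)
      (fun e' => if hd F e' = some x then (1:ℤ) else 0)
      (fun e' he' => by simp [hd, Function.update_of_ne he'])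
  simp only [tl, hd, Function.update_self] at h1 h2
  simp only [exz, outZ, inZ, tl, hd, arcδ]
  rw [h1, h2]
  unfold tl hd
  ring

lemma fvalid_update {G : Multigraph V E} {F : E → Option (V × V)} (hF : G.FValid F) (e : E)
    {o : Option (V × V)} (ho : ∀ p q, o = some (p, q) → G.ends e = s(p, q)) :
    G.FValid (Function.update F e o) := by
  intro e' p q h
  by_cases he' : e' = e
  · subst he'
    rw [Function.update_self] at h
    exact ho p q h
  · rw [Function.update_of_ne he'] at h
    exact hF e' p q h

/-- Residual arc from `a` to `b` via edge `e`. -/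
def ResVia (G : Multigraph V E) (F : E → Option (V × V)) (e : E) (a b : V) : Prop :=
  (F e = none ∧ G.ends e = s(a, b)) ∨ F e = some (b, a)

/-- Residual arc from `a` to `b`. -/
def Res (G : Multigraph V E) (F : E → Option (V × V)) (a b : V) : Prop :=
  ∃ e, G.ResVia F e a b

/-- Flipping a residual arc: validity is preserved, and the excess moves one
unit from `b` to `a`. -/
lemma flip [Fintype E] {G : Multigraph V E} {F : E → Option (V × V)} {e : E} {a b : V}
    (hF : G.FValid F) (h : G.ResVia F e a b) :
    ∃ F' : E → Option (V × V), G.FValid F' ∧ (∀ e', e' ≠ e → F' e' = F e') ∧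
      (∀ x, exz F' x = exz F x + (if x = a then 1 else 0) - (if x = b then 1 else 0)) := by
  rcases h with ⟨hnone, hends⟩ | hsome
  · refine ⟨Function.update F e (some (a, b)), fvalid_update hF e ?_,
      fun e' he' => Function.update_of_ne he' _ _, fun x => ?_⟩
    · rintro p q hpq
      simp only [Option.some.injEq, Prod.mk.injEq] at hpq
      obtain ⟨rfl, rfl⟩ := hpq
      exact hends
    · rw [exz_update, hnone, arcδ_some, arcδ_none]
      ring
  · refine ⟨Function.update F e none, fvalid_update hF e (by intro p q h; simp at h),
      fun e' he' => Function.update_of_ne he' _ _, fun x => ?_⟩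
    rw [exz_update, hsome, arcδ_some, arcδ_none]
    ring

/-- Chains of residual arcs. -/
inductive ResChain (G : Multigraph V E) (F : E → Option (V × V)) : V → V → Type
  | nil (a : V) : ResChain G F a a
  | cons {a b c : V} (e : E) (h : G.ResVia F e a b) (p : ResChain G F b c) : ResChain G F a c

def ResChain.edges {G : Multigraph V E} {F : E → Option (V × V)} :
    ∀ {a c : V}, ResChain G F a c → List E
  | _, _, .nil _ => []
  | _, _, .cons e _ p => e :: p.edges

lemma ResChain.transport {G : Multigraph V E} {F F' : E → Option (V × V)} :
    ∀ {a c : V} (p : ResChain G F a c), (∀ e ∈ p.edges, F' e = F e) →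
    ∃ q : ResChain G F' a c, q.edges = p.edges
  | _, _, .nil a, _ => ⟨.nil a, rfl⟩
  | _, _, .cons (a := a) (b := b) e h p, hagree => by
    obtain ⟨q, hq⟩ := p.transport (fun e' he' => hagree e' (by simp [ResChain.edges, he']))
    have he : F' e = F e := hagree e (by simp [ResChain.edges])
    have h' : G.ResVia F' e a b := by
      unfold ResVia at h ⊢
      rw [he]
      exact h
    exact ⟨.cons e h' q, by simp [ResChain.edges, hq]⟩

/-- Augmenting along a chain of residual arcs with distinct edges. -/
lemma augment_chain [Fintype E] {G : Multigraph V E} :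
    ∀ {a c : V} {F : E → Option (V × V)}, G.FValid F → (p : ResChain G F a c) →
    p.edges.Nodup →
    ∃ F' : E → Option (V × V), G.FValid F' ∧
      (∀ x, exz F' x = exz F x + (if x = a then 1 else 0) - (if x = c then 1 else 0))
  | _, _, F, hF, .nil a, _ => ⟨F, hF, fun x => by ring⟩
  | _, _, F, hF, .cons e h p, hnd => by
    obtain ⟨F₁, hF₁, hagree, hexz⟩ := flip hF h
    simp only [ResChain.edges, List.nodup_cons] at hnd
    obtain ⟨q, hq⟩ := p.transport (fun e' he' => hagree e' (fun heq => hnd.1 (heq ▸ he')))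
    obtain ⟨F', hF', hexz'⟩ := augment_chain hF₁ q (hq ▸ hnd.2)
    refine ⟨F', hF', fun x => ?_⟩
    rw [hexz' x, hexz x]
    ring
  termination_by a c F hF p hnd => p.edges.length
  decreasing_by simp [ResChain.edges, hq, Nat.lt_succ_self]

end Flows
end Multigraph
namespace Multigraph

section Flows2

attribute [local instance] Classical.propDecidable

open Finset

variable {V E : Type} {G : Multigraph V E} {F : E → Option (V × V)}

lemma ResChain.extract :
    ∀ {b c : V} (p : ResChain G F b c) (e : E), e ∈ p.edges →
    ∃ (b' c' : V), G.ResVia F e b' c' ∧ ∃ s : ResChain G F c' c,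
      s.edges.length < p.edges.length ∧ ∀ e' ∈ s.edges, e' ∈ p.edges
  | _, _, .cons (a := a) (b := b) e' h p', e, hmem => by
    simp only [ResChain.edges, List.mem_cons] at hmem
    by_cases he : e = e'
    · subst he
      exact ⟨a, b, h, p', by simp [ResChain.edges], fun e'' h'' => by simp [ResChain.edges, h'']⟩
    · obtain ⟨b', c', h', s, hlen, hsub⟩ := p'.extract e (hmem.resolve_left he)
      exact ⟨b', c', h', s, by simp only [ResChain.edges, List.length_cons]; omega,
        fun e'' h'' => by simp [ResChain.edges, hsub e'' h'']⟩

lemma ResChain.dedup {a c : V} :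
    ∀ (n : ℕ) (p : ResChain G F a c), p.edges.length ≤ n →
    ∃ q : ResChain G F a c, q.edges.Nodup ∧ ∀ e ∈ q.edges, e ∈ p.edges
  | n, .nil _, _ => ⟨.nil _, by simp [ResChain.edges], fun _ h => h⟩
  | 0, .cons e h p', hlen => by simp [ResChain.edges] at hlen
  | n + 1, .cons (a := a) (b := b) e h p', hlen => by
    simp only [ResChain.edges, List.length_cons] at hlen
    by_cases he : e ∈ p'.edges
    · obtain ⟨b', c', h', s, hslen, hssub⟩ := p'.extract e he
      -- analyse the two residual uses of `e`
      have hcase : (c' = b ∧ b' = a) ∨ c' = a := by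
        rcases h with ⟨hn, hends⟩ | hsome
        · rcases h' with ⟨_, hends'⟩ | hsome'
          · rw [hends] at hends'
            rw [Sym2.eq_iff] at hends'
            tauto
          · rw [hn] at hsome'; simp at hsome'
        · rcases h' with ⟨hn', _⟩ | hsome'
          · rw [hsome] at hn'; simp at hn'
          · rw [hsome] at hsome'
            simp only [Option.some.injEq, Prod.mk.injEq] at hsome'
            exact Or.inl ⟨hsome'.1.symm, hsome'.2.symm⟩
      rcases hcase with ⟨rfl, -⟩ | rfl
      · -- shortcut: go straight from `a` through `e` to `b`, then `s`
        have hnew : (ResChain.cons e h s).edges.length ≤ n := by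
          simp only [ResChain.edges, List.length_cons]
          omega
        obtain ⟨q, hq1, hq2⟩ := ResChain.dedup n (.cons e h s) hnew
        refine ⟨q, hq1, fun e' he' => ?_⟩
        have := hq2 e' he'
        simp only [ResChain.edges, List.mem_cons] at this ⊢
        rcases this with rfl | h'' 
        · exact Or.inl rfl
        · exact Or.inr (hssub e' h'')
      · -- the suffix `s` already starts at `a`
        obtain ⟨q, hq1, hq2⟩ := ResChain.dedup n s (by omega)
        exact ⟨q, hq1, fun e' he' => by
          simp only [ResChain.edges, List.mem_cons]
          exact Or.inr (hssub e' (hq2 e' he'))⟩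
    · obtain ⟨q, hq1, hq2⟩ := ResChain.dedup n p' (by omega)
      refine ⟨.cons e h q, ?_, fun e' he' => ?_⟩
      · simp only [ResChain.edges, List.nodup_cons]
        exact ⟨fun hmem => he (hq2 e hmem), hq1⟩
      · simp only [ResChain.edges, List.mem_cons] at he' ⊢
        rcases he' with rfl | he'
        · exact Or.inl rfl
        · exact Or.inr (hq2 e' he')

lemma chain_of_rtg {a c : V} (h : Relation.ReflTransGen (G.Res F) a c) :
    Nonempty (ResChain G F a c) := by
  induction h using Relation.ReflTransGen.head_induction_on with
  | refl => exact ⟨.nil c⟩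
  | head h' _ ih =>
    obtain ⟨e, he⟩ := h'
    obtain ⟨p⟩ := ih
    exact ⟨.cons e he p⟩

lemma sum_indicator_option (o : Option V) (S : Finset V) :
    ∑ x ∈ S, (if o = some x then (1:ℤ) else 0) =
      if ∃ p, o = some p ∧ p ∈ S then 1 else 0 := by
  cases o with
  | none => simp
  | some p =>
    simp only [Option.some.injEq]
    rw [show (∃ q, p = q ∧ q ∈ S) = (p ∈ S) by simp]
    simp [Finset.sum_ite_eq]

lemma sum_exz [Fintype E] (F : E → Option (V × V)) (S : Finset V) :
    ∑ x ∈ S, exz F x =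
      ∑ e : E, ((if ∃ p, tl F e = some p ∧ p ∈ S then (1:ℤ) else 0) -
                (if ∃ p, hd F e = some p ∧ p ∈ S then 1 else 0)) := by
  simp only [exz, outZ, inZ]
  rw [Finset.sum_sub_distrib, Finset.sum_comm, Finset.sum_comm (s := S)]
  rw [Finset.sum_sub_distrib]
  congr 1 <;> exact Finset.sum_congr rfl (fun e _ => sum_indicator_option _ _)

/-- If `S` is closed under residual arcs, the cut at `S` is saturated. -/
lemma cutsize_eq_sum_exz [Fintype E] (hF : G.FValid F) (S : Finset V)
    (hclosed : ∀ x ∈ S, ∀ y, G.Res F x y → y ∈ S) :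
    (G.cutsize S : ℤ) = ∑ x ∈ S, exz F x := by
  rw [sum_exz, cutsize, Finset.card_filter]
  push_cast
  apply Finset.sum_congr rfl
  intro e _
  cases hFe : F e with
  | none =>
    simp only [tl, hd, hFe, Option.map_none]
    have : ¬ G.cross S e := by
      rintro ⟨x, hx, y, hy, hends⟩
      exact hy (hclosed x hx y ⟨e, Or.inl ⟨hFe, hends⟩⟩)
    simp [this]
  | some pq =>
    obtain ⟨p, q⟩ := pq
    have hends := hF e p q hFe
    simp only [tl, hd, hFe, Option.map_some, Option.some.injEq]
    rw [show (∃ r, p = r ∧ r ∈ S) = (p ∈ S) by simp, show (∃ r, q = r ∧ r ∈ S) = (q ∈ S) by simp]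
    by_cases hp : p ∈ S <;> by_cases hq : q ∈ S
    · have : ¬ G.cross S e := by
        rintro ⟨x, hx, y, hy, hends'⟩
        rw [hends'] at hends
        rw [Sym2.eq_iff] at hends
        rcases hends with ⟨rfl, rfl⟩ | ⟨rfl, rfl⟩ <;> exact hy (by assumption)
      simp [this, hp, hq]
    · have : G.cross S e := ⟨p, hp, q, hq, hends⟩
      simp [this, hp, hq]
    · exact absurd (hclosed q hq p ⟨e, Or.inr hFe⟩) hp
    · have : ¬ G.cross S e := by
        rintro ⟨x, hx, y, hy, hends'⟩
        rw [hends'] at hends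
        rw [Sym2.eq_iff] at hends
        rcases hends with ⟨rfl, rfl⟩ | ⟨rfl, rfl⟩ <;> exact (by assumption : ¬ _ ∈ S) hx
      simp [this, hp, hq]

lemma sum_value_fun {u v : V} (huv : u ≠ v) (j : ℤ) (S : Finset V) (hu : u ∈ S) (hv : v ∉ S) :
    ∑ x ∈ S, (if x = u then j else if x = v then -j else 0) = j := by
  have : ∀ x ∈ S, (if x = u then j else if x = v then -j else 0) =
      j * (if x = u then 1 else 0) := by
    intro x hx
    split_ifs with h1 h2
    · ring
    · subst h2; exact absurd hx hv
    · ring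
  rw [Finset.sum_congr rfl this, ← Finset.mul_sum, Finset.sum_ite_eq' S u (fun _ => (1:ℤ))]
  simp [hu]

/-- Existence of a flow of value `k` given the cut condition. -/
lemma exists_flow [Fintype V] [Fintype E] (G : Multigraph V E) {u v : V} (huv : u ≠ v)
    (k : ℕ) (hcut : ∀ S : Finset V, u ∈ S → v ∉ S → k ≤ G.cutsize S) :
    ∀ j : ℕ, j ≤ k → ∃ F, G.FValid F ∧
      ∀ x, exz F x = if x = u then (j:ℤ) else if x = v then -(j:ℤ) else 0
  | 0, _ => by
    refine ⟨fun _ => none, fun e p q h => by simp at h, fun x => ?_⟩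
    simp [exz, outZ, inZ, tl, hd]
  | j + 1, hj => by
    obtain ⟨F, hF, hexz⟩ := exists_flow G huv k hcut j (by omega)
    set S : Finset V := univ.filter (fun x => Relation.ReflTransGen (G.Res F) u x) with hS
    have hu : u ∈ S := by
      simp only [hS, mem_filter, mem_univ, true_and]
      exact Relation.ReflTransGen.refl
    have hv : Relation.ReflTransGen (G.Res F) u v := by
      by_contra hv
      have hvS : v ∉ S := by simp [hS, hv]
      have hclosed : ∀ x ∈ S, ∀ y, G.Res F x y → y ∈ S := by
        intro x hx y hxy
        simp only [hS, mem_filter, mem_univ, true_and] at hx ⊢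
        exact hx.tail hxy
      have h1 : (G.cutsize S : ℤ) = ∑ x ∈ S, exz F x := cutsize_eq_sum_exz hF S hclosed
      rw [Finset.sum_congr rfl (fun x _ => hexz x), sum_value_fun huv _ S hu hvS] at h1
      have h2 := hcut S hu hvS
      omega
    obtain ⟨p⟩ := chain_of_rtg hv
    obtain ⟨q, hq1, _⟩ := ResChain.dedup p.edges.length p (le_refl _)
    obtain ⟨F', hF', hexz'⟩ := augment_chain hF q hq1
    refine ⟨F', hF', fun x => ?_⟩
    rw [hexz' x, hexz x]
    rcases eq_or_ne x u with rfl | hxu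
    · simp [huv]
    · rcases eq_or_ne x v with rfl | hxv
      · simp [hxu, Ne.symm huv]
        push_cast
        ring
      · simp [hxu, hxv]

end Flows2
end Multigraph
namespace Multigraph

section Flows3

attribute [local instance] Classical.propDecidable

open Finset

variable {V E : Type} {G : Multigraph V E}

noncomputable def usedCard [Fintype E] (F : E → Option (V × V)) : ℕ :=
  (univ.filter (fun e => F e ≠ none)).card

lemma inZ_nonneg [Fintype E] (F : E → Option (V × V)) (x : V) : 0 ≤ inZ F x :=
  Finset.sum_nonneg (fun e _ => by split_ifs <;> norm_num)

lemma exists_out [Fintype E] {F : E → Option (V × V)} {a : V} (h : 1 ≤ exz F a) :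
    ∃ e, tl F e = some a := by
  by_contra hc
  push_neg at hc
  have : outZ F a = 0 := Finset.sum_eq_zero (fun e _ => by simp [hc e])
  have := inZ_nonneg F a
  unfold exz at h
  omega

lemma extract_walk [Fintype E] {v : V} :
    ∀ (n : ℕ) (F : E → Option (V × V)), usedCard F ≤ n → G.FValid F →
    ∀ (c : V → ℤ), (∀ x, exz F x = c x) → (∀ x, x ≠ v → 0 ≤ c x) →
    ∀ a, 1 ≤ c a →
    ∃ (W : G.Walk a v) (F' : E → Option (V × V)), G.FValid F' ∧
      (∀ x, exz F' x = c x - (if x = a then 1 else 0) + (if x = v then 1 else 0)) ∧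
      (∀ e ∈ W.edges, F e ≠ none) ∧
      (∀ e, F' e ≠ none → (F e ≠ none ∧ e ∉ W.edges)) := by
  intro n
  induction n with
  | zero =>
    intro F hn hF c hc hnn a ha
    rcases eq_or_ne a v with rfl | hav
    · exact ⟨.nil a, F, hF, fun x => by ring_nf; rw [hc x], by simp [Walk.edges],
        fun e he => ⟨he, by simp [Walk.edges]⟩⟩
    · exfalso
      obtain ⟨e, he⟩ := exists_out (by rw [hc a]; exact ha)
      have hene : F e ≠ none := by
        intro h; rw [tl, h] at he; simp at he
      have : e ∈ univ.filter (fun e => F e ≠ none) := by simp [hene]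
      have := Finset.card_pos.mpr ⟨e, this⟩
      unfold usedCard at hn
      omega
  | succ n ih =>
    intro F hn hF c hc hnn a ha
    rcases eq_or_ne a v with rfl | hav
    · exact ⟨.nil a, F, hF, fun x => by ring_nf; rw [hc x], by simp [Walk.edges],
        fun e he => ⟨he, by simp [Walk.edges]⟩⟩
    · obtain ⟨e, he⟩ := exists_out (by rw [hc a]; exact ha)
      obtain ⟨p, q, hFe⟩ : ∃ p q, F e = some (p, q) := by
        cases hFe : F e with
        | none => rw [tl, hFe] at he; simp at he
        | some pq => exact ⟨pq.1, pq.2, by simp⟩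
      have hpa : p = a := by rw [tl, hFe] at he; simpa using he
      subst hpa
      have hends : G.ends e = s(p, q) := hF e p q hFe
      set F₁ := Function.update F e none with hF₁def
      have hF₁ : G.FValid F₁ := fvalid_update hF e (by intro p' q' h; simp at h)
      have hused : usedCard F₁ ≤ n := by
        have hsub : univ.filter (fun e' => F₁ e' ≠ none) ⊂ univ.filter (fun e' => F e' ≠ none) := by
          constructor
          · intro e' he'
            simp only [mem_filter, mem_univ, true_and] at he' ⊢
            by_cases h : e' = e
            · subst h; rw [hF₁def, Function.update_self] at he'; exact absurd rfl he'
            · rwa [hF₁def, Function.update_of_ne h] at he'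
          · intro hsup
            have h1 : e ∈ univ.filter (fun e' => F e' ≠ none) := by simp [hFe]
            have h2 := hsup h1
            simp only [mem_filter, mem_univ, true_and, hF₁def, Function.update_self] at h2
            exact h2 rfl
        have h2 : usedCard F₁ < usedCard F := Finset.card_lt_card hsub
        omega
      have hc₁ : ∀ x, exz F₁ x = c x - (if x = p then 1 else 0) + (if x = q then 1 else 0) := by
        intro x
        rw [hF₁def, exz_update, hFe, arcδ_some, arcδ_none, hc x]
        ring
      rcases eq_or_ne q v with rfl | hqv
      · refine ⟨.cons e hends (.nil q), F₁, hF₁, fun x => by rw [hc₁ x], ?_, ?_⟩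
        · intro e' he'
          simp only [Walk.edges, List.mem_cons, List.not_mem_nil, or_false] at he'
          subst he'
          simp [hFe]
        · intro e' he'
          constructor
          · by_cases h : e' = e
            · subst h; rw [hF₁def, Function.update_self] at he'; exact absurd rfl he'
            · rwa [hF₁def, Function.update_of_ne h] at he'
          · simp only [Walk.edges, List.mem_cons, List.not_mem_nil, or_false]
            intro h
            subst h
            rw [hF₁def, Function.update_self] at he'
            exact he' rfl
      · have hca : 1 ≤ c p := ha
        have hnn₁ : ∀ x, x ≠ v → 0 ≤ (fun x => c x - (if x = p then 1 else 0) +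
            (if x = q then 1 else 0)) x := by
          intro x hx
          dsimp only
          by_cases h1 : x = p
          · subst h1
            simp only [if_pos rfl]
            split_ifs <;> omega
          · have := hnn x hx
            simp only [if_neg h1]
            split_ifs <;> omega
        have hq1 : 1 ≤ (fun x => c x - (if x = p then 1 else 0) + (if x = q then 1 else 0)) q := by
          dsimp only
          have h0 := hnn q hqv
          by_cases h : q = p
          · subst h
            simp only [if_pos rfl]
            omega
          · simp only [if_neg h]
            split_ifs <;> omega
        obtain ⟨W', F', hF', hexz', hWe', hclean'⟩ := ih F₁ hused hF₁ _ hc₁ hnn₁ q hq1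
        refine ⟨.cons e hends W', F', hF', fun x => ?_, ?_, ?_⟩
        · rw [hexz' x]
          ring
        · intro e' he'
          simp only [Walk.edges, List.mem_cons] at he'
          rcases he' with rfl | he'
          · simp [hFe]
          · have := hWe' e' he'
            by_cases h : e' = e
            · simp [hFe, h]
            · intro hcon
              rw [hF₁def, Function.update_of_ne h] at this
              exact this hcon
        · intro e' he'
          obtain ⟨h1, h2⟩ := hclean' e' he'
          have h3 : e' ≠ e := by
            intro h
            subst h
            rw [hF₁def, Function.update_self] at h1
            exact h1 rfl
          constructor
          · rwa [hF₁def, Function.update_of_ne h3] at h1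
          · simp only [Walk.edges, List.mem_cons]
            rintro (rfl | h4)
            · exact h3 rfl
            · exact h2 h4

lemma exists_disjoint_walks [Fintype V] [Fintype E] {u v : V} (huv : u ≠ v) :
    ∀ (j : ℕ) (F : E → Option (V × V)), G.FValid F →
    (∀ x, exz F x = if x = u then (j:ℤ) else if x = v then -(j:ℤ) else 0) →
    ∃ l : List (G.Walk u v), l.length = j ∧
      List.Pairwise (fun W W' => ∀ e ∈ W.edges, e ∉ Walk.edges W') l ∧
      ∀ W ∈ l, ∀ e ∈ Walk.edges W, F e ≠ none
  | 0, F, hF, hexz => ⟨[], rfl, by simp, by simp⟩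
  | j + 1, F, hF, hexz => by
    set c : V → ℤ := fun x => if x = u then ((j:ℤ)+1) else if x = v then -((j:ℤ)+1) else 0 with hcdef
    have hc : ∀ x, exz F x = c x := by
      intro x
      rw [hexz x, hcdef]
      push_cast
      rfl
    have hnn : ∀ x, x ≠ v → 0 ≤ c x := by
      intro x hx
      rw [hcdef]
      dsimp only
      split_ifs <;> omega
    have hcu : 1 ≤ c u := by
      rw [hcdef]
      dsimp only
      simp only [if_pos rfl, if_true, ite_true]
      omega
    obtain ⟨W, F', hF', hexz', hWe, hclean⟩ :=
      extract_walk (usedCard F) F (le_refl _) hF c hc hnn u hcu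
    have hval' : ∀ x, exz F' x = if x = u then (j:ℤ) else if x = v then -(j:ℤ) else 0 := by
      intro x
      rw [hexz' x, hcdef]
      dsimp only
      rcases eq_or_ne x u with rfl | h1
      · simp only [if_pos rfl, if_neg huv, if_true, ite_true]
        ring
      · rcases eq_or_ne x v with rfl | h2
        · simp only [if_neg h1, if_pos rfl, if_true, ite_true]
          ring
        · simp only [if_neg h1, if_neg h2]
          ring
    obtain ⟨l, hlen, hpw, hlive⟩ := exists_disjoint_walks huv j F' hF' hval'
    refine ⟨W :: l, by simp [hlen], ?_, ?_⟩
    · refine List.Pairwise.cons ?_ hpw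
      intro W' hW' e heW
      intro heW'
      have := hlive W' hW' e heW'
      exact (hclean e this).2 heW
    · intro W' hW' e heW'
      rcases List.mem_cons.mp hW' with rfl | hW'
      · exact hWe e heW'
      · exact (hclean e (hlive W' hW' e heW')).1

/-- **Menger's theorem** (edge version, hard direction). -/
theorem menger [Fintype V] [Fintype E] (G : Multigraph V E) (k : ℕ) {u v : V} (huv : u ≠ v)
    (hcut : ∀ S : Finset V, u ∈ S → v ∉ S → k ≤ G.cutsize S) :
    G.HasEdgeDisjointPaths k u v := by
  obtain ⟨F, hF, hexz⟩ := exists_flow G huv k hcut k (le_refl k)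
  obtain ⟨l, hlen, hpw, -⟩ := exists_disjoint_walks huv k F hF hexz
  set P : G.Walk u v → G.Walk u v := fun W => Classical.choose W.exists_path with hPdef
  have hP : ∀ W : G.Walk u v, (P W).IsPath ∧ ∀ e ∈ (P W).edges, e ∈ W.edges :=
    fun W => Classical.choose_spec W.exists_path
  rw [List.pairwise_iff_get] at hpw
  refine ⟨fun i => P (l.get (Fin.cast hlen.symm i)), fun i => (hP _).1, ?_⟩
  intro i j hij e hei hej
  have hei' := (hP _).2 e hei
  have hej' := (hP _).2 e hej
  rcases lt_or_gt_of_ne hij with h | h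
  · exact hpw (Fin.cast hlen.symm i) (Fin.cast hlen.symm j)
      (by rw [Fin.lt_def, Fin.coe_cast, Fin.coe_cast]; exact h) e hei' hej'
  · exact hpw (Fin.cast hlen.symm j) (Fin.cast hlen.symm i)
      (by rw [Fin.lt_def, Fin.coe_cast, Fin.coe_cast]; exact h) e hej' hei'

end Flows3
end Multigraph
namespace Multigraph

section Posi

attribute [local instance] Classical.propDecidable

open Finset

variable {V E : Type} {G : Multigraph V E}

lemma exists_ends (G : Multigraph V E) (e : E) : ∃ x y, G.ends e = s(x, y) :=
  Sym2.ind (fun x y => ⟨x, y, rfl⟩) (G.ends e)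

lemma cross_iff {S : Finset V} {e : E} {x y : V} (h : G.ends e = s(x, y)) :
    G.cross S e ↔ (x ∈ S ∧ y ∉ S) ∨ (y ∈ S ∧ x ∉ S) := by
  constructor
  · rintro ⟨a, ha, b, hb, hab⟩
    rw [h, Sym2.eq_iff] at hab
    rcases hab with ⟨rfl, rfl⟩ | ⟨rfl, rfl⟩
    · exact Or.inl ⟨ha, hb⟩
    · exact Or.inr ⟨ha, hb⟩
  · rintro (⟨h1, h2⟩ | ⟨h1, h2⟩)
    · exact ⟨x, h1, y, h2, h⟩
    · exact ⟨y, h1, x, h2, by rwa [Sym2.eq_swap]⟩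

lemma cutsize_posimodular [Fintype E] (A B : Finset V) :
    G.cutsize (A \ B) + G.cutsize (B \ A) ≤ G.cutsize A + G.cutsize B := by
  unfold cutsize
  simp only [Finset.card_filter]
  rw [← Finset.sum_add_distrib, ← Finset.sum_add_distrib]
  apply Finset.sum_le_sum
  intro e _
  obtain ⟨x, y, hxy⟩ := exists_ends G e
  simp only [if_congr (cross_iff (S := A \ B) hxy) rfl rfl,
    if_congr (cross_iff (S := B \ A) hxy) rfl rfl,
    if_congr (cross_iff (S := A) hxy) rfl rfl,
    if_congr (cross_iff (S := B) hxy) rfl rfl, Finset.mem_sdiff]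
  by_cases hxA : x ∈ A <;> by_cases hxB : x ∈ B <;>
    by_cases hyA : y ∈ A <;> by_cases hyB : y ∈ B <;>
    simp [hxA, hxB, hyA, hyB]

end Posi
end Multigraph
namespace Multigraph

section Del

attribute [local instance] Classical.propDecidable

open Finset

variable {V E : Type} {G : Multigraph V E} {e₀ : E}

lemma Walk.toDel : ∀ {u v : V} (p : G.Walk u v), e₀ ∉ p.edges →
    ∃ q : (G.deleteEdge e₀).Walk u v, q.edges.map Subtype.val = p.edges ∧ q.support = p.support
  | _, _, .nil w, _ => ⟨.nil w, by simp [Walk.edges], rfl⟩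
  | _, _, .cons e he p, hmem => by
    simp only [Walk.edges, List.mem_cons, not_or] at hmem
    obtain ⟨q, hq1, hq2⟩ := p.toDel hmem.2
    refine ⟨.cons ⟨e, fun h => hmem.1 h.symm⟩ (by exact he) q, ?_, ?_⟩
    · simp [Walk.edges, hq1]
    · simp [Walk.support, hq2]

lemma cross_del_iff {S : Finset V} {e : {e : E // e ≠ e₀}} :
    (G.deleteEdge e₀).cross S e ↔ G.cross S e.1 := Iff.rfl

lemma cutsize_del_le [Fintype E] (S : Finset V) :
    (G.deleteEdge e₀).cutsize S ≤ G.cutsize S := by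
  apply Finset.card_le_card_of_injOn (fun e => e.1)
  · rintro ⟨e, he⟩ hmem
    simp only [Finset.mem_coe, mem_filter, mem_univ, true_and] at hmem ⊢
    exact hmem
  · rintro ⟨e, he⟩ - ⟨e', he'⟩ - h
    exact Subtype.ext h

lemma filter_cross_subset [Fintype E] (S : Finset V) :
    univ.filter (G.cross S) ⊆
      insert e₀ ((univ.filter ((G.deleteEdge e₀).cross S)).image Subtype.val) := by
  intro e he
  simp only [mem_filter, mem_univ, true_and] at he
  rw [Finset.mem_insert]
  by_cases h : e = e₀
  · exact Or.inl h
  · refine Or.inr ?_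
    rw [Finset.mem_image]
    exact ⟨⟨e, h⟩, by simpa [mem_filter, cross_del_iff] using he, rfl⟩

lemma cutsize_le_del [Fintype E] (S : Finset V) :
    G.cutsize S ≤ (G.deleteEdge e₀).cutsize S + 1 := by
  calc G.cutsize S ≤ _ := Finset.card_le_card (filter_cross_subset (e₀ := e₀) S)
  _ ≤ ((univ.filter ((G.deleteEdge e₀).cross S)).image Subtype.val).card + 1 :=
      Finset.card_insert_le _ _
  _ ≤ (G.deleteEdge e₀).cutsize S + 1 := by
      exact Nat.add_le_add_right (Finset.card_image_le) 1

lemma cutsize_le_del_of_not_cross [Fintype E] {S : Finset V} (h : ¬ G.cross S e₀) :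
    G.cutsize S ≤ (G.deleteEdge e₀).cutsize S := by
  have hsub : univ.filter (G.cross S) ⊆
      (univ.filter ((G.deleteEdge e₀).cross S)).image Subtype.val := by
    intro e he
    have h2 := filter_cross_subset (e₀ := e₀) S he
    rw [Finset.mem_insert] at h2
    rcases h2 with rfl | h2
    · simp only [mem_filter, mem_univ, true_and] at he
      exact absurd he h
    · exact h2
  calc G.cutsize S ≤ _ := Finset.card_le_card hsub
  _ ≤ _ := Finset.card_image_le

/-- An edge-connected graph has large cuts. -/
lemma cut_lb {k : ℕ} [Fintype E] (hconn : G.EdgeConnected k) {S : Finset V} {x y : V}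
    (hx : x ∈ S) (hy : y ∉ S) : k ≤ G.cutsize S :=
  le_cutsize_of_paths (hconn.2 x y (fun h => hy (h ▸ hx))) hx hy

/-- Every edge of an edge-minimal `k`-edge-connected graph crosses a `k`-cut. -/
lemma exists_tight_cross [Fintype V] [Fintype E] {k : ℕ} (hG : G.EdgeMinimal k) (e₀ : E) :
    ∃ S : Finset V, G.cross S e₀ ∧ G.cutsize S = k := by
  have hdel := hG.2 e₀
  rw [EdgeConnected, not_and_or] at hdel
  rcases hdel with h | h
  · exact absurd hG.1.1 h
  · push_neg at h
    obtain ⟨u, v, huv, hp⟩ := h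
    obtain ⟨S, hu, hv, hcut⟩ : ∃ S : Finset V, u ∈ S ∧ v ∉ S ∧
        (G.deleteEdge e₀).cutsize S < k := by
      by_contra hc
      push_neg at hc
      exact hp (menger (G.deleteEdge e₀) k huv (fun S h1 h2 => hc S h1 h2))
    have h1 : k ≤ G.cutsize S := cut_lb hG.1 hu hv
    have h2 : G.cutsize S ≤ (G.deleteEdge e₀).cutsize S + 1 := cutsize_le_del S
    have h3 : G.cross S e₀ := by
      by_contra hcr
      have := cutsize_le_del_of_not_cross hcr
      omega
    exact ⟨S, h3, by omega⟩

end Del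
end Multigraph
namespace Multigraph

section Deg

attribute [local instance] Classical.propDecidable

open Finset

variable {V E : Type} {G : Multigraph V E}

lemma no_loops [Fintype V] [Fintype E] {k : ℕ} (hG : G.EdgeMinimal k) (e₀ : E) (x : V) :
    G.ends e₀ ≠ s(x, x) := by
  intro h
  apply hG.2 e₀
  refine ⟨hG.1.1, ?_⟩
  intro u v huv
  obtain ⟨f, hpath, hdisj⟩ := hG.1.2 u v huv
  have havoid : ∀ i, e₀ ∉ (f i).edges :=
    fun i hmem => (f i).not_loop_of_isPath (hpath i) e₀ hmem x h
  choose q hq1 hq2 using fun i => (f i).toDel (havoid i)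
  refine ⟨q, fun i => ?_, fun i j hij e he hej => ?_⟩
  · unfold Walk.IsPath
    rw [hq2 i]
    exact hpath i
  · have h1 : e.1 ∈ (f i).edges := by rw [← hq1 i]; exact List.mem_map_of_mem he
    have h2 : e.1 ∈ (f j).edges := by rw [← hq1 j]; exact List.mem_map_of_mem hej
    exact hdisj i j hij e.1 h1 h2

lemma count_toMset (x a b : V) :
    Multiset.count x (s(a, b)).toMset =
      (if x = a then 1 else 0) + (if x = b then 1 else 0) := by
  have h : (s(a, b)).toMset = {a, b} := rfl
  rw [h]
  rw [show ({a, b} : Multiset V) = a ::ₘ {b} from rfl]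
  rw [Multiset.count_cons, Multiset.count_singleton]
  omega

lemma degree_eq_cutsize [Fintype V] [Fintype E]
    (hnl : ∀ e (x : V), G.ends e ≠ s(x, x)) (x : V) :
    G.degree x = G.cutsize ({x} : Finset V) := by
  unfold degree cutsize
  rw [Finset.card_filter]
  apply Finset.sum_congr rfl
  intro e _
  obtain ⟨a, b, hab⟩ := exists_ends G e
  have hne : a ≠ b := by
    intro h
    exact hnl e a (by rw [hab, h])
  rw [hab, count_toMset, if_congr (cross_iff (S := {x}) hab) rfl rfl]
  simp only [Finset.mem_singleton]
  by_cases h1 : x = a <;> by_cases h2 : x = b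
  · exact absurd (h1 ▸ h2) hne
  · subst h1
    simp [h2, hne.symm, fun h : b = x => h2 h.symm]
  · subst h2
    simp [h1, hne, fun h : a = x => h1 h.symm]
  · rw [if_neg (fun h : x = a => h1 h), if_neg (fun h : x = b => h2 h), if_neg]
    rintro (⟨rfl, -⟩ | ⟨rfl, -⟩)
    · exact h1 rfl
    · exact h2 rfl

lemma descent [Fintype V] [Fintype E] {k : ℕ} (hG : G.EdgeMinimal k) (hk : 1 ≤ k)
    {S : Finset V} (hcut : G.cutsize S = k) {x y : V} (hx : x ∈ S) (hy : y ∈ S)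
    (hxy : x ≠ y) :
    ∃ T, T ⊂ S ∧ T.Nonempty ∧ G.cutsize T = k := by
  -- there is an edge with both endpoints inside S
  have hedge : ∃ e a b, G.ends e = s(a, b) ∧ a ∈ S ∧ b ∈ S := by
    by_contra hno
    push_neg at hno
    obtain ⟨f, hpath, hdisj⟩ := hG.1.2 x y hxy
    have hins : ∀ i, ∀ e ∈ (f i).edges, ∀ a b, G.ends e = s(a, b) → a ∈ S → b ∈ S → False :=
      fun i e he a b h1 h2 h3 => hno e a b h1 h2 h3
    choose e₁ he₁ e₂ he₂ hprops using
      fun i => (f i).exists_two_cross (hpath i) hx hy hxy (hins i)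
    have hcard : (univ : Finset (Fin k × Bool)).card ≤ (univ.filter (G.cross S)).card := by
      apply Finset.card_le_card_of_injOn (fun p => if p.2 then e₂ p.1 else e₁ p.1)
      · rintro ⟨i, b⟩ -
        simp only [mem_filter, mem_univ, true_and]
        cases b
        · simpa using (hprops i).2.1
        · simpa using (hprops i).2.2
      · rintro ⟨i, b⟩ - ⟨j, b'⟩ - hg
        simp only at hg
        have hij : i = j := by
          by_contra hij
          have hmem1 : (if b then e₂ i else e₁ i) ∈ (f i).edges := by
            cases b <;> simp [he₁ i, he₂ i]
          have hmem2 : (if b' then e₂ j else e₁ j) ∈ (f j).edges := by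
            cases b' <;> simp [he₁ j, he₂ j]
          rw [← hg] at hmem2
          exact hdisj i j hij _ hmem1 hmem2
        subst hij
        have hbb : b = b' := by
          by_contra hbb2
          have hne2 := (hprops i).1
          cases b <;> cases b'
          · exact hbb2 rfl
          · simp only [Bool.false_eq_true, if_false, if_true] at hg
            exact hne2 hg
          · simp only [Bool.false_eq_true, if_false, if_true] at hg
            exact hne2 hg.symm
          · exact hbb2 rfl
        simp [hbb]
    have h2 : (univ : Finset (Fin k × Bool)).card = k * 2 := by
      simp [Finset.card_univ]
    rw [h2] at hcard
    have : (univ.filter (G.cross S)).card = k := hcut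
    omega
  obtain ⟨e, a, b, hab, haS, hbS⟩ := hedge
  obtain ⟨T, hcross, hTk⟩ := exists_tight_cross hG e
  rw [cross_iff hab] at hcross
  have key : ∀ a b : V, a ∈ S → b ∈ S → a ∈ T → b ∉ T →
      ∃ T', T' ⊂ S ∧ T'.Nonempty ∧ G.cutsize T' = k := by
    intro a b haS hbS haT hbT
    by_cases hTS : T ⊆ S
    · exact ⟨T, ⟨hTS, fun h => hbT (h hbS)⟩, ⟨a, haT⟩, hTk⟩
    · obtain ⟨z, hzT, hzS⟩ : ∃ z ∈ T, z ∉ S := by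
        by_contra hc
        push_neg at hc
        exact hTS hc
      have h1 : k ≤ G.cutsize (S \ T) := by
        refine cut_lb hG.1 (x := b) (y := a) ?_ ?_
        · simp [hbS, hbT]
        · simp [haT]
      have h2 : k ≤ G.cutsize (T \ S) := by
        refine cut_lb hG.1 (x := z) (y := b) ?_ ?_
        · simp [hzT, hzS]
        · simp [hbT]
      have h3 := cutsize_posimodular (G := G) S T
      rw [hcut, hTk] at h3
      have h4 : G.cutsize (S \ T) = k := by omega
      refine ⟨S \ T, ?_, ⟨b, by simp [hbS, hbT]⟩, h4⟩
      refine ⟨Finset.sdiff_subset, fun h => ?_⟩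
      have := h haS
      simp only [Finset.mem_sdiff] at this
      exact this.2 haT
  rcases hcross with ⟨haT, hbT⟩ | ⟨hbT, haT⟩
  · exact key a b haS hbS haT hbT
  · exact key b a hbS haS hbT haT

end Deg
end Multigraph
namespace Multigraph

section Final

attribute [local instance] Classical.propDecidable

open Finset

variable {V E : Type} {G : Multigraph V E}

lemma exists_min_tight [Fintype V] [Fintype E] {k : ℕ} (hG : G.EdgeMinimal k) (hk : 1 ≤ k)
    (A : Finset V) (hA1 : A.Nonempty) (hA2 : G.cutsize A = k) :
    ∃ a ∈ A, G.cutsize {a} = k := by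
  classical
  set P : Finset V → Prop := fun S => S ⊆ A ∧ S.Nonempty ∧ G.cutsize S = k with hPdef
  have hne : (univ.filter P).Nonempty := ⟨A, by simp [hPdef, hA1, hA2]⟩
  obtain ⟨S₀, hS₀mem, hS₀min⟩ := Finset.exists_min_image (univ.filter P) Finset.card hne
  simp only [mem_filter, mem_univ, true_and, hPdef] at hS₀mem
  obtain ⟨hsub, hS₀ne, hS₀k⟩ := hS₀mem
  have hcard : S₀.card = 1 := by
    rcases Nat.lt_or_ge S₀.card 2 with h | h
    · have := Finset.card_pos.mpr hS₀ne
      omega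
    · exfalso
      obtain ⟨x, hx, y, hy, hxy⟩ := Finset.one_lt_card.mp h
      obtain ⟨T, hT1, hT2, hT3⟩ := descent hG hk hS₀k hx hy hxy
      have hTmem : T ∈ univ.filter P := by
        simp only [mem_filter, mem_univ, true_and, hPdef]
        exact ⟨hT1.1.trans hsub, hT2, hT3⟩
      have := hS₀min T hTmem
      have := Finset.card_lt_card hT1
      omega
  obtain ⟨a, rfl⟩ := Finset.card_eq_one.mp hcard
  exact ⟨a, hsub (by simp), hS₀k⟩

end Final
end Multigraph

/-- Every edge-minimal, `k`-edge-connected multigraph has at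
least two vertices of degree exactly `k`. -/
theorem edgeMinimal_two_vertices_of_degree_k {V E : Type} [Fintype V] [Fintype E]
    (G : Multigraph V E) (k : ℕ) (hG : G.EdgeMinimal k) :
    ∃ u v : V, u ≠ v ∧ G.degree u = k ∧ G.degree v = k := by
  classical
  open Multigraph in
  obtain ⟨u₀, v₀, huv₀⟩ := hG.1.1
  rcases Nat.eq_zero_or_pos k with rfl | hk
  · -- `k = 0`: there are no edges at all, so all degrees vanish.
    have hE : IsEmpty E := by
      by_contra h
      rw [not_isEmpty_iff] at h
      obtain ⟨e₀⟩ := h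
      apply hG.2 e₀
      exact ⟨hG.1.1, fun u v huv =>
        ⟨fun i => i.elim0, fun i => i.elim0, fun i j _ => i.elim0⟩⟩
    refine ⟨u₀, v₀, huv₀, ?_, ?_⟩ <;>
      · unfold Multigraph.degree
        rw [Finset.univ_eq_empty, Finset.sum_empty]
  · -- `k ≥ 1`
    have hnl : ∀ e (x : V), G.ends e ≠ s(x, x) := fun e x => Multigraph.no_loops hG e x
    -- find some edge
    obtain ⟨e⟩ : Nonempty E := by
      obtain ⟨f, hpath, hdisj⟩ := hG.1.2 u₀ v₀ huv₀
      cases hW : f ⟨0, hk⟩ with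
      | nil => exact absurd rfl huv₀
      | cons e he p => exact ⟨e⟩
    obtain ⟨S, hcrossS, hSk⟩ := Multigraph.exists_tight_cross hG e
    obtain ⟨x₁, hx₁, y₁, hy₁, -⟩ := hcrossS
    obtain ⟨a, haS, hak⟩ := Multigraph.exists_min_tight hG hk S ⟨x₁, hx₁⟩ hSk
    -- second vertex inside the complement of {a}
    have hcompl_ne : ({a}ᶜ : Finset V).Nonempty := by
      rcases eq_or_ne u₀ a with rfl | h
      · exact ⟨v₀, by simp [Ne.symm huv₀]⟩
      · exact ⟨u₀, by simp [h]⟩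
    have hcompl_k : G.cutsize ({a}ᶜ : Finset V) = k := by
      rw [Multigraph.cutsize_compl]
      exact hak
    obtain ⟨b, hb, hbk⟩ := Multigraph.exists_min_tight hG hk ({a}ᶜ) hcompl_ne hcompl_k
    have hba : b ≠ a := by simpa using hb
    refine ⟨a, b, Ne.symm hba, ?_, ?_⟩
    · rw [Multigraph.degree_eq_cutsize hnl a, hak]
    · rw [Multigraph.degree_eq_cutsize hnl b, hbk]
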